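/- For all integers j ≥ 0: D_4(0, 2j+2) = (3^j + 1)/2, D_4(1, 2j+1) = (3^j + 1)/2, D_4(2, 2j+2) = 3^j, D_4(3, 2j+3) = (3^{j+1} − 1)/2, and D_4(4, 2j+4) = (3^{j+1} − 1)/2. -/
import Mathlib


/-- Number of directed paths from `(0,0)` to `(j,i)` in the Bratteli diagram for `SU(2)_k`. -/
def bratteliD (k : ℕ) : ℕ → ℕ → ℕ
  | i, 0 => if i = 0 then 1 else 0
  | i, j + 1 =>
      if i ≤ k then
        (if 1 ≤ i then bratteliD k (i - 1) j else 0) +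
        (if i + 1 ≤ k then bratteliD k (i + 1) j else 0)
      else 0

lemma bD0 (n : ℕ) : bratteliD 4 0 (n + 1) = bratteliD 4 1 n := by simp [bratteliD]
lemma bD1 (n : ℕ) : bratteliD 4 1 (n + 1) = bratteliD 4 0 n + bratteliD 4 2 n := by
  simp [bratteliD]
lemma bD2 (n : ℕ) : bratteliD 4 2 (n + 1) = bratteliD 4 1 n + bratteliD 4 3 n := by
  simp [bratteliD]
lemma bD3 (n : ℕ) : bratteliD 4 3 (n + 1) = bratteliD 4 2 n + bratteliD 4 4 n := by
  simp [bratteliD]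
lemma bD4 (n : ℕ) : bratteliD 4 4 (n + 1) = bratteliD 4 3 n := by simp [bratteliD]

theorem bratteliD_four_values (j : ℕ) :
    bratteliD 4 0 (2 * j + 2) = (3 ^ j + 1) / 2 ∧
    bratteliD 4 1 (2 * j + 1) = (3 ^ j + 1) / 2 ∧
    bratteliD 4 2 (2 * j + 2) = 3 ^ j ∧
    bratteliD 4 3 (2 * j + 3) = (3 ^ (j + 1) - 1) / 2 ∧
    bratteliD 4 4 (2 * j + 4) = (3 ^ (j + 1) - 1) / 2 := by
  induction j with
  | zero => refine ⟨?_, ?_, ?_, ?_, ?_⟩ <;> decide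
  | succ j ih =>
    obtain ⟨h0, h1, h2, h3, h4⟩ := ih
    have hodd : 3 ^ j % 2 = 1 := Nat.odd_iff.mp (Odd.pow (by decide : Odd 3))
    have hp1 : 3 ^ (j + 1) = 3 * 3 ^ j := by ring
    have hp2 : 3 ^ (j + 1 + 1) = 3 * 3 ^ (j + 1) := by ring
    have n1 : bratteliD 4 1 (2 * (j + 1) + 1) = (3 ^ (j + 1) + 1) / 2 := by
      have : 2 * (j + 1) + 1 = (2 * j + 2) + 1 := by ring
      rw [this, bD1, h0, h2]; omega
    have n0 : bratteliD 4 0 (2 * (j + 1) + 2) = (3 ^ (j + 1) + 1) / 2 := by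
      have : 2 * (j + 1) + 2 = (2 * (j + 1) + 1) + 1 := by ring
      rw [this, bD0, n1]
    have n2 : bratteliD 4 2 (2 * (j + 1) + 2) = 3 ^ (j + 1) := by
      have : 2 * (j + 1) + 2 = (2 * j + 3) + 1 := by ring
      rw [this, bD2]
      have e : 2 * j + 3 = 2 * (j + 1) + 1 := by ring
      rw [e, n1, ← e, h3]; omega
    have n3 : bratteliD 4 3 (2 * (j + 1) + 3) = (3 ^ (j + 1 + 1) - 1) / 2 := by
      have : 2 * (j + 1) + 3 = (2 * (j + 1) + 2) + 1 := by ring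
      rw [this, bD3, n2]
      have e : 2 * (j + 1) + 2 = 2 * j + 4 := by ring
      rw [e, h4]; omega
    have n4 : bratteliD 4 4 (2 * (j + 1) + 4) = (3 ^ (j + 1 + 1) - 1) / 2 := by
      have : 2 * (j + 1) + 4 = (2 * (j + 1) + 3) + 1 := by ring
      rw [this, bD4, n3]
    exact ⟨n0, n1, n2, n3, n4⟩
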